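/- Suppose r : ℝ → ℂ is continuous with |r(τ)| ≤ 1, |r(τ)| = 1 only at τ = 0 with at most logarithmic blow-up of F(|r(τ)|) near τ = 0, and |r(τ)| ≤ M/|τ|^α for large |τ| with α > 1. Then ∫_{-∞}^{∞} |r(τ)|·₃F₂(1,1,1;3/2,3/2;|r(τ)|²) dτ < ∞. -/

import Mathlib

open MeasureTheory Real Set

/-- Pochhammer (rising factorial) symbol `(a)_k`. -/
noncomputable def poch (a : ℝ) (k : ℕ) : ℝ := ∏ i ∈ Finset.range k, (a + i)

/-- The zero-balanced generalized hypergeometric series `₃F₂(1,1,1;3/2,3/2;z)`. -/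
noncomputable def F32 (z : ℝ) : ℝ :=
  ∑' k : ℕ, ((k.factorial : ℝ) / poch (3/2) k)^2 * z^k

lemma poch_pos (k : ℕ) : 0 < poch (3/2) k := by
  unfold poch
  exact Finset.prod_pos fun i _ => by positivity

lemma factorial_le_poch (k : ℕ) : (k.factorial : ℝ) ≤ poch (3/2) k := by
  unfold poch
  rw [← Finset.prod_range_add_one_eq_factorial]
  push_cast
  exact Finset.prod_le_prod (fun i _ => by positivity) (fun i _ => by linarith)

lemma F32_coeff_le_one (k : ℕ) : ((k.factorial : ℝ) / poch (3/2) k)^2 ≤ 1 := by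
  have h1 := poch_pos k
  have h2 := factorial_le_poch k
  have h3 : (k.factorial : ℝ) / poch (3/2) k ≤ 1 := (div_le_one h1).mpr h2
  have h0 : (0:ℝ) ≤ (k.factorial : ℝ) / poch (3/2) k := by positivity
  nlinarith

lemma F32_nonneg {z : ℝ} (hz : 0 ≤ z) : 0 ≤ F32 z :=
  tsum_nonneg fun k => by positivity

lemma F32_le {z : ℝ} (hz0 : 0 ≤ z) (hz1 : z < 1) : F32 z ≤ (1 - z)⁻¹ := by
  have hgeo := summable_geometric_of_lt_one hz0 hz1
  have hterm : ∀ k : ℕ, ((k.factorial : ℝ) / poch (3/2) k)^2 * z^k ≤ z^k := fun k =>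
    mul_le_of_le_one_left (pow_nonneg hz0 k) (F32_coeff_le_one k)
  have hsum : Summable (fun k : ℕ => ((k.factorial : ℝ) / poch (3/2) k)^2 * z^k) :=
    Summable.of_nonneg_of_le (fun k => by positivity) hterm hgeo
  calc F32 z ≤ ∑' k : ℕ, z^k := Summable.tsum_le_tsum hterm hsum hgeo
    _ = (1 - z)⁻¹ := tsum_geometric_of_lt_one hz0 hz1

lemma integrableOn_neg_of_even {f : ℝ → ℝ} {s : Set ℝ} (hsymm : ∀ x, f (-x) = f x)
    (hf : IntegrableOn f s) : IntegrableOn f (-s) := by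
  have h := ((Measure.measurePreserving_neg (volume : Measure ℝ)).integrableOn_comp_preimage
      (Homeomorph.neg ℝ).measurableEmbedding (f := f) (s := s)).mpr hf
  have hfun : (f ∘ Neg.neg) = f := funext hsymm
  rwa [hfun, show (Neg.neg ⁻¹' s : Set ℝ) = -s from rfl] at h

/-- If `r` is continuous with `|r| ≤ 1`, `|r| = 1` only at `0` with at most logarithmic
blow-up of `|r| · ₃F₂(1,1,1;3/2,3/2;|r|²)` near `0`, and `|r|` decays faster than
`1/|τ|^α` with `α > 1`, then `|r(τ)| · ₃F₂(1,1,1;3/2,3/2;|r(τ)|²)` is integrable. -/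
theorem absolute_integrability_of_autocovariance_bound
    (r : ℝ → ℂ) (hcont : Continuous r)
    (hle : ∀ τ, ‖r τ‖ ≤ 1)
    (hlt : ∀ τ, τ ≠ 0 → ‖r τ‖ < 1)
    (hlog : ∃ A B ε : ℝ, 0 < A ∧ 0 < B ∧ 0 < ε ∧
      ∀ τ : ℝ, τ ≠ 0 → |τ| < ε →
        ‖r τ‖ * F32 (‖r τ‖^2) ≤ A + B * |Real.log (abs τ)|)
    (hdecay : ∃ M T α : ℝ, 0 < M ∧ 0 < T ∧ 1 < α ∧
      ∀ τ : ℝ, T ≤ |τ| → ‖r τ‖ ≤ M / |τ|^α) :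
    (∫⁻ τ : ℝ, ENNReal.ofReal (‖r τ‖ * F32 (‖r τ‖^2))) < ⊤ := by
  obtain ⟨A, B, ε, hA, hB, hε, hlog⟩ := hlog
  obtain ⟨M, T, α, hM, hT, hα, hdecay⟩ := hdecay
  set T' : ℝ := max (max T ε) (max 1 ((2*M) ^ (α⁻¹))) with hT'def
  have hT'T : T ≤ T' := le_max_of_le_left (le_max_left _ _)
  have hT'ε : ε ≤ T' := le_max_of_le_left (le_max_right _ _)
  have hT'1 : (1:ℝ) ≤ T' := le_max_of_le_right (le_max_left _ _)
  have hT'M : (2*M) ^ (α⁻¹) ≤ T' := le_max_of_le_right (le_max_right _ _)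
  have hT'pos : 0 < T' := lt_of_lt_of_le one_pos hT'1
  -- on the tail, `‖r τ‖ ≤ 1/2`
  have htail : ∀ τ : ℝ, T' < |τ| → ‖r τ‖ ≤ 1/2 := by
    intro τ hτ
    have h1 : ‖r τ‖ ≤ M / |τ| ^ α := hdecay τ (le_trans hT'T hτ.le)
    have h2 : 2*M ≤ |τ| ^ α := by
      have hle' : (2*M) ^ (α⁻¹) ≤ |τ| := le_trans hT'M hτ.le
      have h3 : ((2*M) ^ (α⁻¹)) ^ α ≤ |τ| ^ α :=
        Real.rpow_le_rpow (Real.rpow_nonneg (by positivity) _) hle' (by linarith)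
      rwa [← Real.rpow_mul (by positivity), inv_mul_cancel₀ (by linarith : α ≠ 0), Real.rpow_one] at h3
    have hpow : (0:ℝ) < |τ| ^ α := Real.rpow_pos_of_pos (lt_trans hT'pos hτ) α
    have h4 : M / |τ| ^ α ≤ M / (2*M) :=
      div_le_div_of_nonneg_left hM.le (by positivity) h2
    have h5 : M / (2*M) = 1/2 := by field_simp
    linarith
  -- compact middle region and its max
  set S2 : Set ℝ := Icc (-T') T' ∩ (Ioo (-ε) ε)ᶜ with hS2def
  have hS2meas : MeasurableSet S2 :=
    measurableSet_Icc.inter isOpen_Ioo.isClosed_compl.measurableSet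
  have hS2cpt : IsCompact S2 := isCompact_Icc.inter_right isOpen_Ioo.isClosed_compl
  have hS2ne : S2.Nonempty := by
    refine ⟨ε, ⟨⟨by linarith, hT'ε⟩, fun hmem => ?_⟩⟩
    exact lt_irrefl ε hmem.2
  obtain ⟨τ₀, hτ₀S, hτ₀max⟩ := hS2cpt.exists_isMaxOn hS2ne (hcont.norm.continuousOn)
  set c := ‖r τ₀‖ with hc
  have hτ₀ne : τ₀ ≠ 0 := by
    intro h
    exact hτ₀S.2 (by rw [h]; exact mem_Ioo.mpr ⟨by linarith, hε⟩)
  have hc1 : c < 1 := hlt τ₀ hτ₀ne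
  have hc0 : 0 ≤ c := norm_nonneg _
  have hcb : ∀ τ ∈ S2, ‖r τ‖ ≤ c := fun τ hτ => hτ₀max hτ
  -- general bound
  have hgb : ∀ (τ : ℝ) (b : ℝ), ‖r τ‖ ≤ b → b < 1 → ‖r τ‖ * F32 (‖r τ‖^2) ≤ (1 - b^2)⁻¹ := by
    intro τ b hb hb1
    have h0 : 0 ≤ ‖r τ‖ := norm_nonneg _
    have h1 : F32 (‖r τ‖^2) ≤ (1 - ‖r τ‖^2)⁻¹ := F32_le (by positivity) (by nlinarith)
    have h2 : (1 - ‖r τ‖^2)⁻¹ ≤ (1 - b^2)⁻¹ := by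
      apply inv_anti₀ (by nlinarith) (by nlinarith)
    calc ‖r τ‖ * F32 (‖r τ‖^2) ≤ 1 * (1 - ‖r τ‖^2)⁻¹ :=
          mul_le_mul (hle τ) h1 (F32_nonneg (by positivity)) zero_le_one
      _ = (1 - ‖r τ‖^2)⁻¹ := one_mul _
      _ ≤ (1 - b^2)⁻¹ := h2
  -- the majorant
  set h : ℝ → ℝ := fun τ =>
    if |τ| < ε then A + B * max (Real.log ε) 0 + 2*B * |τ| ^ (-(1/2) : ℝ)
    else if |τ| ≤ T' then (1 - c^2)⁻¹
    else 4/3 * M * |τ| ^ (-α) with hhdef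
  -- pointwise bound
  have hbound : ∀ τ : ℝ, τ ≠ 0 → ‖r τ‖ * F32 (‖r τ‖^2) ≤ h τ := by
    intro τ hτ
    have habs : 0 < |τ| := abs_pos.mpr hτ
    by_cases h1 : |τ| < ε
    · simp only [hhdef, if_pos h1]
      have hL := hlog τ hτ h1
      have hlog2 : abs (Real.log (abs τ)) ≤ max (Real.log ε) 0 + 2 * |τ| ^ (-(1/2):ℝ) := by
        have hrp : (0:ℝ) < |τ| ^ (-(1/2):ℝ) := Real.rpow_pos_of_pos habs _
        rcases le_or_gt 1 |τ| with hge | hlt1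
        · rw [abs_of_nonneg (Real.log_nonneg hge)]
          have h2 : Real.log |τ| ≤ Real.log ε := Real.log_le_log habs h1.le
          have h3 : Real.log ε ≤ max (Real.log ε) 0 := le_max_left _ _
          linarith
        · rw [abs_of_nonpos (Real.log_nonpos habs.le hlt1.le)]
          have h3 : Real.log (|τ| ^ (-(1/2):ℝ)) = -(1/2) * Real.log |τ| :=
            Real.log_rpow habs _
          have h4 : Real.log (|τ| ^ (-(1/2):ℝ)) ≤ |τ| ^ (-(1/2):ℝ) - 1 :=
            Real.log_le_sub_one_of_pos hrp
          have h5 : (0:ℝ) ≤ max (Real.log ε) 0 := le_max_right _ _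
          nlinarith
      have := mul_le_mul_of_nonneg_left hlog2 hB.le
      linarith
    · by_cases h2 : |τ| ≤ T'
      · simp only [hhdef, if_neg h1, if_pos h2]
        have hmem : τ ∈ S2 := by
          refine ⟨abs_le.mp h2, fun hmem' => h1 (abs_lt.mpr ⟨hmem'.1, hmem'.2⟩)⟩
        exact hgb τ c (hcb τ hmem) hc1
      · simp only [hhdef, if_neg h1, if_neg h2]
        push_neg at h2
        have hr2 : ‖r τ‖ ≤ 1/2 := htail τ h2
        have hF : ‖r τ‖ * F32 (‖r τ‖^2) ≤ (1 - (1/2:ℝ)^2)⁻¹ := hgb τ (1/2) hr2 (by norm_num)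
        have hF' : F32 (‖r τ‖^2) ≤ 4/3 := by
          have h0 : 0 ≤ ‖r τ‖ := norm_nonneg _
          have h1' : F32 (‖r τ‖^2) ≤ (1 - ‖r τ‖^2)⁻¹ := F32_le (by positivity) (by nlinarith)
          have h3 : (1 - ‖r τ‖^2)⁻¹ ≤ ((3:ℝ)/4)⁻¹ :=
            inv_anti₀ (by norm_num) (by nlinarith)
          have h4 : ((3:ℝ)/4)⁻¹ = 4/3 := by norm_num
          linarith
        have hrd := hdecay τ (le_trans hT'T h2.le)
        calc ‖r τ‖ * F32 (‖r τ‖^2) ≤ (M / |τ|^α) * (4/3) :=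
              mul_le_mul hrd hF' (F32_nonneg (by positivity)) (by positivity)
          _ = 4/3 * M * |τ| ^ (-α) := by
              rw [Real.rpow_neg habs.le]; field_simp
  -- the majorant is even
  have heven : ∀ x : ℝ, h (-x) = h x := by
    intro x; simp only [hhdef, abs_neg]
  -- integrability of the majorant
  have hInt : Integrable h := by
    have hS1 : IntegrableOn h (Ioo (-ε) ε) := by
      have hpos : IntegrableOn (fun τ : ℝ => |τ| ^ (-(1/2):ℝ)) (Ioo 0 ε) := by
        refine ((intervalIntegral.integrableOn_Ioo_rpow_iff hε).mpr (show (-1:ℝ) < -(1/2) by norm_num)).congr_fun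
          (fun x hx => ?_) measurableSet_Ioo
        rw [abs_of_pos hx.1]
      have hneg : IntegrableOn (fun τ : ℝ => |τ| ^ (-(1/2):ℝ)) (Ioo (-ε) 0) := by
        have heq : Ioo (-ε) (0:ℝ) = -(Ioo 0 ε) := by simp
        rw [heq]
        exact integrableOn_neg_of_even (fun x => by rw [abs_neg]) hpos
      have hint1 : IntegrableOn (fun τ : ℝ => |τ| ^ (-(1/2):ℝ)) (Ioo (-ε) ε) := by
        rw [← Set.Ioo_union_Ico_eq_Ioo (by linarith : -ε < (0:ℝ)) hε.le, integrableOn_union]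
        exact ⟨hneg, (integrableOn_Ico_iff_integrableOn_Ioo).mpr hpos⟩
      have hintf : IntegrableOn
          (fun τ : ℝ => A + B * max (Real.log ε) 0 + 2*B * |τ| ^ (-(1/2):ℝ))
          (Ioo (-ε) ε) :=
        ((integrableOn_const_iff (C := A + B * max (Real.log ε) 0)).mpr (Or.inr measure_Ioo_lt_top)).add (hint1.const_mul (2*B))
      exact hintf.congr_fun (fun τ hτ => by
        simp only [hhdef, if_pos (abs_lt.mpr ⟨hτ.1, hτ.2⟩)]) measurableSet_Ioo
    have hS2' : IntegrableOn h S2 := by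
      have hfin : volume S2 < ⊤ :=
        lt_of_le_of_lt (measure_mono inter_subset_left) measure_Icc_lt_top
      refine ((integrableOn_const_iff (C := (1 - c^2)⁻¹)).mpr (Or.inr hfin)).congr_fun (fun τ hτ => ?_) hS2meas
      have h1 : ¬ |τ| < ε := fun hlt' => hτ.2 (abs_lt.mp hlt' |> fun ⟨a, b⟩ => mem_Ioo.mpr ⟨a, b⟩)
      have h2 : |τ| ≤ T' := abs_le.mpr hτ.1
      simp only [hhdef, if_neg h1, if_pos h2]
    have hS3p : IntegrableOn h (Ioi T') := by
      have hint3 : IntegrableOn (fun τ : ℝ => 4/3 * M * τ ^ (-α)) (Ioi T') :=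
        (integrableOn_Ioi_rpow_of_lt (by linarith) hT'pos).const_mul _
      refine hint3.congr_fun (fun τ hτ => ?_) measurableSet_Ioi
      have hτpos : (0:ℝ) < τ := lt_trans hT'pos hτ
      have h1 : ¬ τ < ε := not_lt.mpr (le_trans hT'ε (le_of_lt hτ))
      have h2 : ¬ τ ≤ T' := not_le.mpr hτ
      simp only [hhdef, abs_of_pos hτpos, if_neg h1, if_neg h2]
    have hS3m : IntegrableOn h (Iio (-T')) := by
      have heq : Iio (-T') = -(Ioi T') := by simp
      rw [heq]
      exact integrableOn_neg_of_even heven hS3p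
    rw [← integrableOn_univ]
    have hcover : (Set.univ : Set ℝ) ⊆ (Ioo (-ε) ε ∪ S2) ∪ (Iio (-T') ∪ Ioi T') := by
      intro τ _
      by_cases h1 : |τ| < ε
      · exact Or.inl (Or.inl (abs_lt.mp h1 |> fun ⟨a, b⟩ => mem_Ioo.mpr ⟨a, b⟩))
      · by_cases h2 : |τ| ≤ T'
        · exact Or.inl (Or.inr ⟨abs_le.mp h2,
            fun hm => h1 (abs_lt.mpr ⟨hm.1, hm.2⟩)⟩)
        · push_neg at h2
          rcases lt_or_ge τ 0 with hneg | hpos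
          · refine Or.inr (Or.inl ?_)
            rw [abs_of_neg hneg] at h2
            exact mem_Iio.mpr (by linarith)
          · refine Or.inr (Or.inr ?_)
            rw [abs_of_nonneg hpos] at h2
            exact mem_Ioi.mpr h2
    exact ((hS1.union hS2').union (hS3m.union hS3p)).mono_set hcover
  -- conclude
  have hae : ∀ᵐ τ : ℝ, (τ : ℝ) ≠ 0 := by
    rw [ae_iff]
    have hset : {a : ℝ | ¬ a ≠ 0} = {0} := by ext x; simp
    rw [hset]
    exact Real.volume_singleton
  have hmono : ∀ᵐ τ : ℝ,
      ENNReal.ofReal (‖r τ‖ * F32 (‖r τ‖^2)) ≤ ENNReal.ofReal (h τ) := by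
    filter_upwards [hae] with τ hτ
    exact ENNReal.ofReal_le_ofReal (hbound τ hτ)
  calc ∫⁻ τ : ℝ, ENNReal.ofReal (‖r τ‖ * F32 (‖r τ‖^2))
      ≤ ∫⁻ τ : ℝ, ENNReal.ofReal (h τ) := lintegral_mono_ae hmono
    _ < ⊤ := hInt.lintegral_lt_top
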